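/- For every cluster system 𝒞 on a nonempty finite set X, the equal splits index ES is a complete linear phylogenetic diversity index on 𝕃(𝒞); that is, ES is ℝ-linear and Σ_{x∈X} (ES(ω))(x) = Σ_{C∈𝒞} ω(C) for all ω ∈ 𝕃(𝒞). -/

import Mathlib

open Finset

/-- The set of children of a cluster `C` in a cluster system `𝒞`. -/
def ch {α : Type*} [DecidableEq α] (𝒞 : Finset (Finset α)) (C : Finset α) :
    Finset (Finset α) :=
  𝒞.filter fun C' => C' ⊂ C ∧ ∀ C'' ∈ 𝒞, ¬(C' ⊂ C'' ∧ C'' ⊂ C)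

/-- The elements of `C` not contained in any child of `C`. -/
def cl {α : Type*} [DecidableEq α] (𝒞 : Finset (Finset α)) (C : Finset α) :
    Finset α :=
  C.filter fun x => ∀ C' ∈ ch 𝒞 C, x ∉ C'

/-- The equal splits coefficients `m_x(C)`, defined recursively. -/
noncomputable def m {α : Type*} [DecidableEq α] (𝒞 : Finset (Finset α)) (x : α)
    (C : Finset α) : ℝ :=
  if x ∉ C then 0
  else if x ∈ cl 𝒞 C then 1 / (((ch 𝒞 C).card : ℝ) + ((cl 𝒞 C).card : ℝ))
  else ∑ C' ∈ (ch 𝒞 C).attach,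
    m 𝒞 x C'.1 / (((ch 𝒞 C).card : ℝ) + ((cl 𝒞 C).card : ℝ))
termination_by C.card
decreasing_by
  have h : C'.1 ⊂ C := by
    have h2 := C'.2
    simp only [ch, Finset.mem_filter] at h2
    exact h2.2.1
  exact Finset.card_lt_card h

/-- The equal splits index on a cluster system `𝒞`:
`(ES ω)(x) = ∑_{C ∈ 𝒞} m_x(C)·ω(C)`. -/
noncomputable def ES {α : Type*} [DecidableEq α] (𝒞 : Finset (Finset α))
    (ω : ↥𝒞 → ℝ) (x : α) : ℝ :=
  ∑ C : ↥𝒞, m 𝒞 x C.1 * ω C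

lemma m_zero {α : Type*} [DecidableEq α] (𝒞 : Finset (Finset α)) (x : α)
    (C : Finset α) (hx : x ∉ C) : m 𝒞 x C = 0 := by
  rw [m]; simp [hx]

lemma sum_m {α : Type*} [Fintype α] [DecidableEq α] (𝒞 : Finset (Finset α))
    (h𝒞' : ∀ C ∈ 𝒞, C.Nonempty) :
    ∀ C ∈ 𝒞, ∑ x : α, m 𝒞 x C = 1 := by
  intro C
  induction C using Finset.strongInduction with
  | _ C ih =>
    intro hC
    have hd : ((ch 𝒞 C).card : ℝ) + ((cl 𝒞 C).card : ℝ) ≠ 0 := by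
      have : (ch 𝒞 C).card ≠ 0 ∨ (cl 𝒞 C).card ≠ 0 := by
        by_contra h
        push_neg at h
        have hch : ch 𝒞 C = ∅ := Finset.card_eq_zero.mp h.1
        have : cl 𝒞 C = C := by
          ext x
          simp [cl, hch]
        have hcl : cl 𝒞 C ≠ ∅ := by
          rw [this]
          exact (h𝒞' C hC).ne_empty
        exact hcl (Finset.card_eq_zero.mp h.2)
      rcases this with h | h
      · positivity
      · positivity
    -- split the universe sum into C and the rest
    have hsub : ∀ x : α, x ∉ C → m 𝒞 x C = 0 := fun x hx => m_zero 𝒞 x C hx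
    rw [← Finset.sum_subset (Finset.subset_univ C) (fun x _ hx => hsub x hx)]
    have hclC : cl 𝒞 C ⊆ C := by
      intro x hx
      simp only [cl, Finset.mem_filter] at hx
      exact hx.1
    rw [← Finset.sum_sdiff hclC]
    have h1 : ∑ x ∈ cl 𝒞 C, m 𝒞 x C
        = (cl 𝒞 C).card / (((ch 𝒞 C).card : ℝ) + ((cl 𝒞 C).card : ℝ)) := by
      rw [Finset.sum_congr rfl (fun x hx => ?_)]
      · rw [Finset.sum_const, nsmul_eq_mul, mul_one_div]
      · rw [m]
        have hxC : x ∈ C := hclC hx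
        simp [hxC, hx]
    have h2 : ∑ x ∈ C \ cl 𝒞 C, m 𝒞 x C
        = (ch 𝒞 C).card / (((ch 𝒞 C).card : ℝ) + ((cl 𝒞 C).card : ℝ)) := by
      have step : ∀ x ∈ C \ cl 𝒞 C, m 𝒞 x C
          = ∑ C' ∈ (ch 𝒞 C).attach,
              m 𝒞 x C'.1 / (((ch 𝒞 C).card : ℝ) + ((cl 𝒞 C).card : ℝ)) := by
        intro x hx
        rw [Finset.mem_sdiff] at hx
        rw [m]
        simp [hx.1, hx.2]
      rw [Finset.sum_congr rfl step, Finset.sum_comm]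
      have inner : ∀ C' ∈ (ch 𝒞 C).attach,
          ∑ x ∈ C \ cl 𝒞 C,
            m 𝒞 x C'.1 / (((ch 𝒞 C).card : ℝ) + ((cl 𝒞 C).card : ℝ))
          = 1 / (((ch 𝒞 C).card : ℝ) + ((cl 𝒞 C).card : ℝ)) := by
        intro C' _
        rw [← Finset.sum_div]
        congr 1
        have hC'mem := C'.2
        simp only [ch, Finset.mem_filter] at hC'mem
        have hC'C : C'.1 ⊂ C := hC'mem.2.1
        have hC'sub : C'.1 ⊆ C \ cl 𝒞 C := by
          intro x hx
          rw [Finset.mem_sdiff]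
          refine ⟨hC'C.1 hx, ?_⟩
          intro hcl
          simp only [cl, Finset.mem_filter] at hcl
          exact hcl.2 C'.1 C'.2 hx
        rw [← Finset.sum_subset hC'sub (fun x _ hx => m_zero 𝒞 x C'.1 hx)]
        have := ih C'.1 hC'C hC'mem.1
        rw [← this]
        exact Finset.sum_subset (Finset.subset_univ _)
          (fun x _ hx => m_zero 𝒞 x C'.1 hx)
      rw [Finset.sum_congr rfl inner, Finset.sum_const, Finset.card_attach,
        nsmul_eq_mul, mul_one_div]
    rw [h1, h2, ← add_div, div_self hd]

/-- The equal splits index on any cluster system is a complete linear phylogenetic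
diversity index. -/
theorem stmt14 {α : Type*} [Fintype α] [DecidableEq α] [Nonempty α]
    (𝒞 : Finset (Finset α)) (h𝒞 : 𝒞.Nonempty) (h𝒞' : ∀ C ∈ 𝒞, C.Nonempty) :
    (∀ (a : ℝ) (ω₁ ω₂ : ↥𝒞 → ℝ),
        ES 𝒞 (a • ω₁ + ω₂) = a • ES 𝒞 ω₁ + ES 𝒞 ω₂)
    ∧ (∀ ω : ↥𝒞 → ℝ, ∑ x : α, ES 𝒞 ω x = ∑ C : ↥𝒞, ω C) := by
  constructor
  · intro a ω₁ ω₂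
    funext x
    simp only [ES, Pi.add_apply, Pi.smul_apply, smul_eq_mul]
    rw [Finset.mul_sum, ← Finset.sum_add_distrib]
    apply Finset.sum_congr rfl
    intro C _
    ring
  · intro ω
    simp only [ES]
    rw [Finset.sum_comm]
    apply Finset.sum_congr rfl
    intro C _
    rw [← Finset.sum_mul, sum_m 𝒞 h𝒞' C.1 C.2, one_mul]
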